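/- For every cycle C_n with n ≥ 3, the odd chromatic number χ_o(C_n) satisfies: if n is divisible by 3 then χ_o(C_n) = 3, and χ_o(C_n) ≤ 5 in all cases. -/

import Mathlib

/-- A proper coloring of a simple graph: adjacent vertices get different colors. -/
def ProperColoring {V : Type*} (G : SimpleGraph V) (c : V → ℕ) : Prop :=
  ∀ ⦃u v : V⦄, G.Adj u v → c u ≠ c v

/-- The number of neighbors of `v` receiving color `k`. -/
noncomputable def colorCount {V : Type*} (G : SimpleGraph V) (c : V → ℕ) (v : V) (k : ℕ) : ℕ :=
  (G.neighborSet v ∩ {u | c u = k}).ncard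

/-- An odd coloring: a proper coloring such that every non-isolated vertex has some
color appearing an odd number of times in its neighborhood. -/
def OddColoring {V : Type*} (G : SimpleGraph V) (c : V → ℕ) : Prop :=
  ProperColoring G c ∧
    ∀ v : V, (G.neighborSet v).Nonempty → ∃ k : ℕ, Odd (colorCount G c v k)

/-- `G` is odd `k`-colorable if it has an odd coloring using colors `0, …, k-1`. -/
def OddColorable {V : Type*} (G : SimpleGraph V) (k : ℕ) : Prop :=
  ∃ c : V → ℕ, OddColoring G c ∧ ∀ v, c v < k

/-- The odd chromatic number: the least `k` such that `G` is odd `k`-colorable. -/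
noncomputable def oddChromaticNumber {V : Type*} (G : SimpleGraph V) : ℕ :=
  sInf {k | OddColorable G k}

open SimpleGraph

/-- The ℕ-level coloring pattern. -/
def patt (n x : ℕ) : ℕ := if x < n - n % 3 then x % 3 else 3 + (x - (n - n % 3))

lemma patt_lt (n : ℕ) (hn : 3 ≤ n) (x : ℕ) (hx : x < n) : patt n x < 5 := by
  unfold patt; split_ifs <;> omega

lemma patt_lt3 (n : ℕ) (hd : 3 ∣ n) (x : ℕ) (hx : x < n) : patt n x < 3 := by
  unfold patt; split_ifs <;> omega

lemma patt_step1 (n : ℕ) (hn : 3 ≤ n) (x : ℕ) (hx : x < n) :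
    patt n ((x + 1) % n) ≠ patt n x := by
  rcases Nat.lt_or_ge (x + 1) n with h | h
  · rw [Nat.mod_eq_of_lt h]; unfold patt; split_ifs <;> omega
  · have hxn : x + 1 = n := by omega
    have : (x + 1) % n = 0 := by rw [hxn, Nat.mod_self]
    rw [this]; unfold patt; split_ifs <;> omega

lemma patt_step2 (n : ℕ) (hn : 3 ≤ n) (x : ℕ) (hx : x < n) :
    patt n ((x + 2) % n) ≠ patt n x := by
  rcases Nat.lt_or_ge (x + 2) n with h | h
  · rw [Nat.mod_eq_of_lt h]; unfold patt; split_ifs <;> omega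
  · rcases Nat.lt_or_ge (x + 2) (n + 1) with h2 | h2
    · have hxn : x + 2 = n := by omega
      have : (x + 2) % n = 0 := by rw [hxn, Nat.mod_self]
      rw [this]; unfold patt; split_ifs <;> omega
    · have hxn : x + 2 = n + 1 := by omega
      have : (x + 2) % n = 1 := by
        rw [hxn, Nat.add_mod_left, Nat.mod_eq_of_lt (by omega)]
      rw [this]; unfold patt; split_ifs <;> omega

lemma sub_one_ne_add_one {m : ℕ} (v : Fin (m + 3)) : v - 1 ≠ v + 1 := by
  intro h
  have h2 : (v + 1) - (v - 1) = (0 : Fin (m + 3)) := by rw [h, sub_self]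
  have h3 : (v + 1) - (v - 1) = (2 : Fin (m + 3)) := by open Fin.CommRing in ring
  rw [h3, Fin.ext_iff] at h2
  have hv : ((2 : Fin (m + 3))).val = 2 := by
    show (2 : ℕ) % (m + 3) = 2
    exact Nat.mod_eq_of_lt (by omega)
  rw [hv] at h2
  simp at h2

lemma colorCount_eq_one {m : ℕ} (c : Fin (m + 3) → ℕ) (v : Fin (m + 3))
    (h : c (v - 1) ≠ c (v + 1)) :
    colorCount (cycleGraph (m + 3)) c v (c (v + 1)) = 1 := by
  unfold colorCount
  rw [cycleGraph_neighborSet]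
  have : ({v - 1, v + 1} : Set (Fin (m + 3))) ∩ {u | c u = c (v + 1)} = {v + 1} := by
    ext u
    simp only [Set.mem_inter_iff, Set.mem_insert_iff, Set.mem_singleton_iff, Set.mem_setOf_eq]
    constructor
    · rintro ⟨rfl | rfl, hc⟩
      · exact absurd hc h
      · rfl
    · rintro rfl; exact ⟨Or.inr rfl, rfl⟩
  rw [this, Set.ncard_singleton]

lemma colorCount_even {m : ℕ} (c : Fin (m + 3) → ℕ) (v : Fin (m + 3))
    (h : c (v - 1) = c (v + 1)) (k : ℕ) :
    ¬ Odd (colorCount (cycleGraph (m + 3)) c v k) := by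
  unfold colorCount
  rw [cycleGraph_neighborSet]
  by_cases hk : c (v + 1) = k
  · have hs : ({v - 1, v + 1} : Set (Fin (m + 3))) ∩ {u | c u = k} = {v - 1, v + 1} := by
      ext u
      simp only [Set.mem_inter_iff, Set.mem_insert_iff, Set.mem_singleton_iff, Set.mem_setOf_eq]
      constructor
      · rintro ⟨hu, _⟩; exact hu
      · rintro (rfl | rfl)
        · exact ⟨Or.inl rfl, h.trans hk⟩
        · exact ⟨Or.inr rfl, hk⟩
    rw [hs, Set.ncard_pair (sub_one_ne_add_one v)]
    decide
  · have hs : ({v - 1, v + 1} : Set (Fin (m + 3))) ∩ {u | c u = k} = ∅ := by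
      ext u
      simp only [Set.mem_inter_iff, Set.mem_insert_iff, Set.mem_singleton_iff, Set.mem_setOf_eq,
        Set.mem_empty_iff_false, iff_false, not_and]
      rintro (rfl | rfl)
      · rw [h]; exact hk
      · exact hk
    rw [hs, Set.ncard_empty]
    decide

lemma oddColorable_of_good {m : ℕ} (c : Fin (m + 3) → ℕ) (k : ℕ)
    (h1 : ∀ v : Fin (m + 3), c (v + 1) ≠ c v)
    (h2 : ∀ v : Fin (m + 3), c (v + 2) ≠ c v)
    (hb : ∀ v, c v < k) : OddColorable (cycleGraph (m + 3)) k := by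
  refine ⟨c, ⟨?_, ?_⟩, hb⟩
  · intro u v huv
    rw [cycleGraph_adj] at huv
    rcases huv with h | h
    · have : u = v + 1 := by rw [← h]; open Fin.CommRing in ring
      subst this; exact h1 v
    · have : v = u + 1 := by rw [← h]; open Fin.CommRing in ring
      subst this; exact (h1 u).symm
  · intro v _
    refine ⟨c (v + 1), ?_⟩
    have hne : c (v - 1) ≠ c (v + 1) := by
      have := h2 (v - 1)
      have e : v - 1 + 2 = v + 1 := by open Fin.CommRing in ring
      rw [e] at this
      exact this.symm
    rw [colorCount_eq_one c v hne]
    exact odd_one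

lemma not_oddColorable_two {m : ℕ} : ¬ OddColorable (cycleGraph (m + 3)) 2 := by
  rintro ⟨c, ⟨hp, hodd⟩, hb⟩
  set v : Fin (m + 3) := 0 with hv
  have hnonempty : ((cycleGraph (m + 3)).neighborSet v).Nonempty := by
    refine ⟨v + 1, ?_⟩
    rw [cycleGraph_neighborSet]
    exact Or.inr rfl
  obtain ⟨k, hk⟩ := hodd v hnonempty
  have h12 : c (v - 1) ≠ c (v + 1) := fun h => colorCount_even c v h k hk
  have ha : (cycleGraph (m + 3)).Adj v (v + 1) := cycleGraph_adj.mpr (Or.inr (by open Fin.CommRing in ring))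
  have ha' : (cycleGraph (m + 3)).Adj v (v - 1) := cycleGraph_adj.mpr (Or.inl (by open Fin.CommRing in ring))
  have e1 := hp ha
  have e2 := hp ha'
  have b1 := hb v
  have b2 := hb (v + 1)
  have b3 := hb (v - 1)
  omega

/-- For every cycle `C_n` with `n ≥ 3`: if `3 ∣ n` then `χ_o(C_n) = 3`, and in all cases
`χ_o(C_n) ≤ 5`. -/
theorem stmt16 (n : ℕ) (hn : 3 ≤ n) :
    (3 ∣ n → oddChromaticNumber (SimpleGraph.cycleGraph n) = 3) ∧
      oddChromaticNumber (SimpleGraph.cycleGraph n) ≤ 5 := by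
  obtain ⟨m, rfl⟩ : ∃ m, n = m + 3 := ⟨n - 3, by omega⟩
  set c : Fin (m + 3) → ℕ := fun v => patt (m + 3) v.val with hc
  have hval1 : ∀ v : Fin (m + 3), (v + 1 : Fin (m + 3)).val = (v.val + 1) % (m + 3) := by
    intro v; simp [Fin.add_def]
  have hval2 : ∀ v : Fin (m + 3), (v + 2 : Fin (m + 3)).val = (v.val + 2) % (m + 3) := by
    intro v
    simp only [Fin.add_def]
    congr 1
  have h1 : ∀ v : Fin (m + 3), c (v + 1) ≠ c v := by
    intro v
    show patt (m + 3) (v + 1 : Fin (m + 3)).val ≠ patt (m + 3) v.val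
    rw [hval1]
    exact patt_step1 _ (by omega) _ v.isLt
  have h2 : ∀ v : Fin (m + 3), c (v + 2) ≠ c v := by
    intro v
    show patt (m + 3) (v + 2 : Fin (m + 3)).val ≠ patt (m + 3) v.val
    rw [hval2]
    exact patt_step2 _ (by omega) _ v.isLt
  have h5 : OddColorable (cycleGraph (m + 3)) 5 :=
    oddColorable_of_good c 5 h1 h2 (fun v => patt_lt _ (by omega) _ v.isLt)
  constructor
  · intro hd
    have h3 : OddColorable (cycleGraph (m + 3)) 3 :=
      oddColorable_of_good c 3 h1 h2 (fun v => patt_lt3 _ hd _ v.isLt)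
    refine le_antisymm (Nat.sInf_le h3) ?_
    refine le_csInf ⟨3, h3⟩ ?_
    intro k hk
    by_contra hcon
    push_neg at hcon
    apply not_oddColorable_two (m := m)
    obtain ⟨cc, hcc, hbb⟩ := hk
    exact ⟨cc, hcc, fun v => lt_of_lt_of_le (hbb v) (by omega)⟩
  · exact Nat.sInf_le h5
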